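/- For every integer d, there exists a unique smallest partition μ (under inclusion of Young diagrams) among partitions colored in two colors with angle color 0 satisfying d(μ) = N_0(μ) - N_1(μ) = d, and this partition has exactly 2d² - d boxes, where for a box with coordinates (i,j) its color is (i - j) mod 2, and N_c(μ) counts boxes of color c. -/

import Mathlib

/-- `d(μ) = N₀(μ) - N₁(μ)` for a Young diagram colored with angle color 0:
the box `(i, j)` has color `(i - j) mod 2 = (i + j) mod 2`. -/
def dcol0 (μ : YoungDiagram) : ℤ :=
  ((μ.cells.filter fun c => (c.1 + c.2) % 2 = 0).card : ℤ) -
    ((μ.cells.filter fun c => (c.1 + c.2) % 2 = 1).card : ℤ)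

open Finset

/-- sign `(-1)^i` as an explicit if-then-else. -/
def sgn (i : ℕ) : ℤ := if i % 2 = 0 then 1 else -1

lemma sgn_mul_self (i : ℕ) : sgn i * sgn i = 1 := by
  unfold sgn; split <;> norm_num

lemma sgn_succ (i : ℕ) : sgn (i + 1) = - sgn i := by
  unfold sgn
  rcases Nat.mod_two_eq_zero_or_one i with h | h <;> simp [h, Nat.add_mod]

lemma sgn_add (i j : ℕ) : sgn (i + j) = sgn i * sgn j := by
  unfold sgn
  rcases Nat.mod_two_eq_zero_or_one i with h | h <;>
    rcases Nat.mod_two_eq_zero_or_one j with h' | h' <;>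
      simp [h, h', Nat.add_mod]

lemma sum_sgn (r : ℕ) : ∑ j ∈ range r, sgn j = ((r % 2 : ℕ) : ℤ) := by
  induction r with
  | zero => simp
  | succ r ih =>
    rw [Finset.sum_range_succ, ih]
    rcases Nat.mod_two_eq_zero_or_one r with h | h <;> simp [sgn, h] <;> omega

/-- summand in the row formula for `dcol0`. -/
def E (μ : YoungDiagram) (j : ℕ) : ℤ := sgn j * ((μ.rowLen j % 2 : ℕ) : ℤ)

def rowEmb (i : ℕ) : ℕ ↪ ℕ × ℕ := ⟨fun j => (i, j), fun a b h => by simpa using h⟩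

lemma cells_eq_biUnion (μ : YoungDiagram) (n : ℕ) (hn : μ.colLen 0 ≤ n) :
    μ.cells = (range n).biUnion (fun i => (range (μ.rowLen i)).map (rowEmb i)) := by
  ext ⟨i, j⟩
  simp only [Finset.mem_biUnion, Finset.mem_map, Finset.mem_range, rowEmb,
    Function.Embedding.coeFn_mk, YoungDiagram.mem_cells]
  constructor
  · intro h
    refine ⟨i, ?_, j, ?_, rfl⟩
    · have : (i, 0) ∈ μ := μ.up_left_mem le_rfl (Nat.zero_le _) h
      have := YoungDiagram.mem_iff_lt_colLen.mp this
      omega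
    · exact YoungDiagram.mem_iff_lt_rowLen.mp h
  · rintro ⟨i', _, j', hj', h⟩
    obtain ⟨rfl, rfl⟩ : i' = i ∧ j' = j := (Prod.mk.injEq ..).mp h
    exact YoungDiagram.mem_iff_lt_rowLen.mpr hj'

lemma pairwise_disj (μ : YoungDiagram) (n : ℕ) :
    (↑(range n) : Set ℕ).PairwiseDisjoint
      (fun i => (range (μ.rowLen i)).map (rowEmb i)) := by
  intro x _ y _ hxy
  simp only [Function.onFun]
  rw [Finset.disjoint_left]
  rintro ⟨a, b⟩ h1 h2
  simp only [Finset.mem_map, Finset.mem_range, rowEmb, Function.Embedding.coeFn_mk] at h1 h2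
  obtain ⟨_, _, h1⟩ := h1
  obtain ⟨_, _, h2⟩ := h2
  apply hxy
  have e1 := (Prod.mk.injEq ..).mp h1
  have e2 := (Prod.mk.injEq ..).mp h2
  omega

lemma sum_cells (μ : YoungDiagram) (n : ℕ) (hn : μ.colLen 0 ≤ n) (f : ℕ × ℕ → ℤ) :
    ∑ c ∈ μ.cells, f c = ∑ i ∈ range n, ∑ j ∈ range (μ.rowLen i), f (i, j) := by
  rw [cells_eq_biUnion μ n hn, Finset.sum_biUnion (pairwise_disj μ n)]
  congr 1; ext i
  rw [Finset.sum_map]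
  rfl

lemma dcol0_eq_sum_cells (μ : YoungDiagram) :
    dcol0 μ = ∑ c ∈ μ.cells, sgn (c.1 + c.2) := by
  unfold dcol0
  rw [Finset.card_filter, Finset.card_filter]
  push_cast
  rw [← Finset.sum_sub_distrib]
  apply Finset.sum_congr rfl
  intro c _
  rcases Nat.mod_two_eq_zero_or_one (c.1 + c.2) with h | h <;> simp [sgn, h]

lemma dcol0_eq_sum (μ : YoungDiagram) (n : ℕ) (hn : μ.colLen 0 ≤ n) :
    dcol0 μ = ∑ i ∈ range n, E μ i := by
  rw [dcol0_eq_sum_cells, sum_cells μ n hn]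
  apply Finset.sum_congr rfl
  intro i _
  have : ∀ j ∈ range (μ.rowLen i), sgn (i + j) = sgn i * sgn j := fun j _ => sgn_add i j
  rw [Finset.sum_congr rfl this, ← Finset.mul_sum, sum_sgn]
  rfl

lemma card_eq_sum (μ : YoungDiagram) (n : ℕ) (hn : μ.colLen 0 ≤ n) :
    μ.card = ∑ i ∈ range n, μ.rowLen i := by
  show μ.cells.card = _
  rw [cells_eq_biUnion μ n hn, Finset.card_biUnion]
  · simp
  · intro x hx y hy hxy
    exact pairwise_disj μ n (by simpa using hx) (by simpa using hy) hxy

lemma rowLen_zero_of_le (μ : YoungDiagram) {n i : ℕ} (hn : μ.colLen 0 ≤ n) (h : n ≤ i) :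
    μ.rowLen i = 0 := by
  by_contra hne
  have : (i, 0) ∈ μ := YoungDiagram.mem_iff_lt_rowLen.mpr (Nat.pos_of_ne_zero hne)
  have := YoungDiagram.mem_iff_lt_colLen.mp this
  omega

lemma tail_bound (μ : YoungDiagram) (n : ℕ) (hn : μ.colLen 0 ≤ n) :
    ∀ t i, n ≤ i + t →
      2 * (sgn i * ∑ j ∈ Finset.Ico i n, E μ j) ≤ (μ.rowLen i : ℤ) + ((μ.rowLen i % 2 : ℕ) : ℤ) ∧
      -((μ.rowLen i : ℤ) - ((μ.rowLen i % 2 : ℕ) : ℤ)) ≤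
        2 * (sgn i * ∑ j ∈ Finset.Ico i n, E μ j) := by
  intro t
  induction t with
  | zero =>
    intro i hi
    rw [Finset.Ico_eq_empty (by omega), rowLen_zero_of_le μ hn (by omega)]
    simp
  | succ t ih =>
    intro i hi
    by_cases hin : n ≤ i
    · rw [Finset.Ico_eq_empty (by omega), rowLen_zero_of_le μ hn hin]
      simp
    · push_neg at hin
      have key : ∑ j ∈ Finset.Ico i n, E μ j = E μ i + ∑ j ∈ Finset.Ico (i + 1) n, E μ j :=
        Finset.sum_eq_sum_Ico_succ_bot hin _
      have hms := sgn_mul_self i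
      have e1 : sgn i * ∑ j ∈ Finset.Ico i n, E μ j =
          ((μ.rowLen i % 2 : ℕ) : ℤ) - sgn (i + 1) * ∑ j ∈ Finset.Ico (i + 1) n, E μ j := by
        rw [key, sgn_succ]
        unfold E
        linear_combination ((μ.rowLen i % 2 : ℕ) : ℤ) * hms
      obtain ⟨ih1, ih2⟩ := ih (i + 1) (by omega)
      have hanti : μ.rowLen (i + 1) ≤ μ.rowLen i := μ.rowLen_anti i (i + 1) (by omega)
      rw [e1]
      omega
  
lemma head_bound (μ : YoungDiagram) :
    ∀ i, 2 * (∑ j ∈ range i, E μ j) ≤ (i : ℤ) + ((i % 2 : ℕ) : ℤ) ∧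
      -((i : ℤ) - ((i % 2 : ℕ) : ℤ)) ≤ 2 * (∑ j ∈ range i, E μ j) := by
  intro i
  induction i with
  | zero => simp
  | succ i ih =>
    rw [Finset.sum_range_succ]
    rcases Nat.mod_two_eq_zero_or_one i with h | h
    · have hs : sgn i = 1 := by simp [sgn, h]
      rw [show E μ i = sgn i * ((μ.rowLen i % 2 : ℕ) : ℤ) from rfl, hs, one_mul]
      omega
    · have hs : sgn i = -1 := by simp [sgn, h]
      rw [show E μ i = sgn i * ((μ.rowLen i % 2 : ℕ) : ℤ) from rfl, hs]
      omega

lemma dcol_bound (μ : YoungDiagram) (i : ℕ) :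
    -((μ.rowLen i : ℤ) + i) ≤ 2 * dcol0 μ ∧ 2 * dcol0 μ ≤ (μ.rowLen i : ℤ) + i + 1 := by
  set n := max (μ.colLen 0) (i + 1) with hn
  have hcn : μ.colLen 0 ≤ n := le_max_left _ _
  have hd : dcol0 μ = ∑ j ∈ range n, E μ j := dcol0_eq_sum μ n hcn
  have hsplit : (∑ j ∈ range i, E μ j) + ∑ j ∈ Finset.Ico i n, E μ j = ∑ j ∈ range n, E μ j :=
    Finset.sum_range_add_sum_Ico _ (by omega)
  have hh := head_bound μ i
  have ht := tail_bound μ n hcn (n - i) i (by omega)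
  rw [hd, ← hsplit]
  rcases Nat.mod_two_eq_zero_or_one i with h | h
  · have hs : sgn i = 1 := by simp [sgn, h]
    rw [hs] at ht
    omega
  · have hs : sgn i = -1 := by simp [sgn, h]
    rw [hs] at ht
    omega

/-- The staircase Young diagram with rows `k, k-1, ..., 1`. -/
def staircase (k : ℕ) : YoungDiagram where
  cells := (range k ×ˢ range k).filter fun c => c.1 + c.2 < k
  isLowerSet := by
    rintro ⟨a1, a2⟩ ⟨b1, b2⟩ ⟨h1, h2⟩ hb
    simp only [Finset.coe_filter, Set.mem_setOf_eq, Finset.mem_product, Finset.mem_range] at *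
    omega

lemma mem_staircase {k : ℕ} {c : ℕ × ℕ} : c ∈ staircase k ↔ c.1 + c.2 < k := by
  show c ∈ Finset.filter _ _ ↔ _
  simp only [Finset.mem_filter, Finset.mem_product, Finset.mem_range]
  omega

lemma rowLen_eq_of {μ : YoungDiagram} {i m : ℕ} (h : ∀ j, (i, j) ∈ μ ↔ j < m) :
    μ.rowLen i = m := by
  apply le_antisymm
  · by_contra hc
    push_neg at hc
    have := (h m).mp (YoungDiagram.mem_iff_lt_rowLen.mpr hc)
    omega
  · rcases Nat.eq_zero_or_pos m with rfl | hm
    · omega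
    · have := YoungDiagram.mem_iff_lt_rowLen.mp ((h (m - 1)).mpr (by omega))
      omega

lemma rowLen_staircase (k i : ℕ) : (staircase k).rowLen i = k - i :=
  rowLen_eq_of fun j => by rw [mem_staircase]; omega

lemma colLen_staircase_le (k : ℕ) : (staircase k).colLen 0 ≤ k := by
  by_contra h
  push_neg at h
  have := mem_staircase.mp (YoungDiagram.mem_iff_lt_colLen.mpr h)
  omega

lemma aux_sum (k : ℕ) : (∑ i ∈ range k, (k - i)) * 2 = k * (k + 1) := by
  induction k with
  | zero => simp
  | succ k ih =>
    rw [Finset.sum_range_succ']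
    have : ∀ i ∈ range k, (k + 1) - (i + 1) = k - i := fun i _ => by omega
    rw [Finset.sum_congr rfl this, Nat.add_mul, ih]
    simp only [Nat.sub_zero]
    ring

lemma card_staircase (k : ℕ) : (staircase k).card * 2 = k * (k + 1) := by
  rw [card_eq_sum (staircase k) k (colLen_staircase_le k)]
  have : ∀ i ∈ range k, (staircase k).rowLen i = k - i := fun i _ => rowLen_staircase k i
  rw [Finset.sum_congr rfl this, aux_sum]

lemma dcol0_staircase (k : ℕ) :
    2 * dcol0 (staircase k) = ((k % 2 : ℕ) : ℤ) - k * sgn k := by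
  rw [dcol0_eq_sum (staircase k) k (colLen_staircase_le k), Finset.mul_sum]
  have h1 : ∀ i ∈ range k, 2 * E (staircase k) i = sgn i - sgn k := by
    intro i hi
    rw [Finset.mem_range] at hi
    rw [show E (staircase k) i = sgn i * (((staircase k).rowLen i % 2 : ℕ) : ℤ) from rfl,
      rowLen_staircase]
    have hk : sgn k = sgn i * sgn (k - i) := by
      rw [← sgn_add]; congr 1; omega
    rcases Nat.mod_two_eq_zero_or_one (k - i) with h | h
    · have hs1 : sgn (k - i) = 1 := by simp [sgn, h]
      rw [h, hk, hs1]
      push_cast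
      ring
    · have hs1 : sgn (k - i) = -1 := by simp [sgn, h]
      rw [h, hk, hs1]
      push_cast
      ring
  rw [Finset.sum_congr rfl h1, Finset.sum_sub_distrib, sum_sgn, Finset.sum_const,
    Finset.card_range, nsmul_eq_mul]

lemma main_core (d : ℤ) (k : ℕ)
    (h1 : dcol0 (staircase k) = d)
    (h2 : ((staircase k).card : ℤ) = 2 * d ^ 2 - d)
    (h3 : ∀ L i j : ℕ, -((L : ℤ) + i) ≤ 2 * d → 2 * d ≤ (L : ℤ) + i + 1 → i + j < k → j < L) :
    ∃! μ : YoungDiagram,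
      (dcol0 μ = d ∧ ∀ ν : YoungDiagram, dcol0 ν = d → μ ≤ ν) ∧
        (μ.card : ℤ) = 2 * d ^ 2 - d := by
  have hmin : ∀ ν : YoungDiagram, dcol0 ν = d → staircase k ≤ ν := by
    intro ν hν
    rw [← YoungDiagram.cells_subset_iff]
    rintro ⟨i, j⟩ hc
    rw [YoungDiagram.mem_cells] at hc ⊢
    rw [YoungDiagram.mem_iff_lt_rowLen]
    have hb := dcol_bound ν i
    rw [hν] at hb
    exact h3 (ν.rowLen i) i j hb.1 hb.2 (mem_staircase.mp hc)
  refine ⟨staircase k, ⟨⟨h1, hmin⟩, h2⟩, ?_⟩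
  rintro ν ⟨⟨hm1, hm2⟩, _⟩
  exact le_antisymm (hm2 _ h1) (hmin _ hm1)

/-- For every integer `d` there is a unique smallest partition `μ` (under inclusion of
Young diagrams) with `d(μ) = d` (angle color `0`), and it has exactly `2d² - d` boxes. -/
theorem smallest_partition_color0 (d : ℤ) :
    ∃! μ : YoungDiagram,
      (dcol0 μ = d ∧ ∀ ν : YoungDiagram, dcol0 ν = d → μ ≤ ν) ∧
        (μ.card : ℤ) = 2 * d ^ 2 - d := by
  rcases lt_or_ge 0 d with hd | hd
  · set k : ℕ := (2 * d - 1).toNat with hkdef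
    have hk : (k : ℤ) = 2 * d - 1 := Int.toNat_of_nonneg (by omega)
    have hk2 : k % 2 = 1 := by omega
    have hsgn : sgn k = -1 := by simp [sgn, hk2]
    have hdc := dcol0_staircase k
    rw [hsgn, hk2] at hdc
    have h1 : dcol0 (staircase k) = d := by
      push_cast at hdc
      omega
    have h2 : ((staircase k).card : ℤ) = 2 * d ^ 2 - d := by
      have hc : ((staircase k).card : ℤ) * 2 = (k : ℤ) * ((k : ℤ) + 1) := by
        exact_mod_cast card_staircase k
      rw [hk] at hc
      have hX : ((staircase k).card : ℤ) * 2 = (2 * d ^ 2 - d) * 2 := by rw [hc]; ring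
      linarith
    refine main_core d k h1 h2 ?_
    intro L i j hb1 hb2 hij
    omega
  · set k : ℕ := (-(2 * d)).toNat with hkdef
    have hk : (k : ℤ) = -(2 * d) := Int.toNat_of_nonneg (by omega)
    have hk2 : k % 2 = 0 := by omega
    have hsgn : sgn k = 1 := by simp [sgn, hk2]
    have hdc := dcol0_staircase k
    rw [hsgn, hk2] at hdc
    have h1 : dcol0 (staircase k) = d := by
      push_cast at hdc
      omega
    have h2 : ((staircase k).card : ℤ) = 2 * d ^ 2 - d := by
      have hc : ((staircase k).card : ℤ) * 2 = (k : ℤ) * ((k : ℤ) + 1) := by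
        exact_mod_cast card_staircase k
      rw [hk] at hc
      have hX : ((staircase k).card : ℤ) * 2 = (2 * d ^ 2 - d) * 2 := by rw [hc]; ring
      linarith
    refine main_core d k h1 h2 ?_
    intro L i j hb1 hb2 hij
    omega
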